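/- arXiv:1602.06741 — 2 statements merged into one kernel-verified Lean document; each statement's English description precedes it below -/
import Mathlib

section
/- For any normed plane, 1/2 ≤ c_D(‖·‖) ≤ 1. -/
open Module

variable {V : Type*} [NormedAddCommGroup V] [NormedSpace ℝ V]

noncomputable def sine {V : Type*} [NormedAddCommGroup V] [NormedSpace ℝ V] (x y : V) : ℝ :=
  ⨅ t : ℝ, ‖x + t • y‖

def BOrth {V : Type*} [NormedAddCommGroup V] [NormedSpace ℝ V] (x y : V) : Prop :=
  ∀ t : ℝ, ‖x‖ ≤ ‖x + t • y‖

noncomputable def cD (V : Type*) [NormedAddCommGroup V] [NormedSpace ℝ V] : ℝ :=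
  sInf {r : ℝ | ∃ x y : V, ‖x‖ = 1 ∧ ‖y‖ = 1 ∧ BOrth x y ∧ r = sine y x}

noncomputable def cR (V : Type*) [NormedAddCommGroup V] [NormedSpace ℝ V] : ℝ :=
  sSup {r : ℝ | ∃ x y : V, ‖x‖ = 1 ∧ ‖y‖ = 1 ∧ r = |sine x y - sine y x|}

lemma sine_lower {x y : V} (hx : ‖x‖ = 1) (hy : ‖y‖ = 1) (h : BOrth x y) :
    1 / 2 ≤ sine y x := by
  apply le_ciInf
  intro t
  rcases le_or_gt |t| (1 / 2) with ht | ht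
  · have h1 : ‖y‖ - ‖t • x‖ ≤ ‖y + t • x‖ := by
      have := norm_sub_le (y + t • x) (t • x)
      simp only [add_sub_cancel_right] at this
      linarith
    rw [hy, norm_smul, Real.norm_eq_abs, hx, mul_one] at h1
    linarith
  · have ht0 : t ≠ 0 := by
      intro h0; rw [h0] at ht; simp at ht; linarith
    have key : y + t • x = t • (x + t⁻¹ • y) := by
      rw [smul_add, smul_smul, mul_inv_cancel₀ ht0, one_smul]; abel
    rw [key, norm_smul, Real.norm_eq_abs]
    have h2 : ‖x‖ ≤ ‖x + t⁻¹ • y‖ := h t⁻¹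
    rw [hx] at h2
    nlinarith [abs_nonneg t]

lemma sine_upper {x y : V} (hy : ‖y‖ = 1) : sine y x ≤ 1 := by
  have hb : BddBelow (Set.range fun t : ℝ => ‖y + t • x‖) := by
    refine ⟨0, ?_⟩
    rintro _ ⟨t, rfl⟩
    positivity
  have := ciInf_le hb (0 : ℝ)
  simpa [sine, hy] using this

lemma exists_borth (hV : finrank ℝ V = 2) :
    ∃ x y : V, ‖x‖ = 1 ∧ ‖y‖ = 1 ∧ BOrth x y := by
  have : FiniteDimensional ℝ V := FiniteDimensional.of_finrank_eq_succ hV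
  have b := finBasis ℝ V
  rw [hV] at b
  set z := b 0 with hz
  set y₀ := b 1 with hy0
  have hind : LinearIndependent ℝ ![z, y₀] := by
    have := b.linearIndependent
    rw [LinearIndependent.pair_iff]
    intro s t hst
    have h2 : s • b 0 + t • b 1 = 0 := hst
    have := Fintype.linearIndependent_iff.1 b.linearIndependent ![s, t] (by
      simpa [Fin.sum_univ_two] using h2)
    exact ⟨this 0, this 1⟩
  have hy₀ : y₀ ≠ 0 := b.ne_zero 1
  set y : V := ‖y₀‖⁻¹ • y₀ with hy
  have hyn : ‖y‖ = 1 := by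
    have h0 : ‖y₀‖ ≠ 0 := norm_ne_zero_iff.2 hy₀
    rw [hy, norm_smul, Real.norm_eq_abs, abs_inv, abs_norm, inv_mul_cancel₀ h0]
  -- z + s • y ≠ 0 for all s
  have hne : ∀ s : ℝ, z + s • y ≠ 0 := by
    intro s hs
    rw [hy, smul_smul] at hs
    have := (LinearIndependent.pair_iff.1 hind) 1 (s * ‖y₀‖⁻¹) (by
      simpa using hs)
    exact one_ne_zero this.1
  -- minimize s ↦ ‖z + s • y‖
  have hcont : Continuous fun s : ℝ => ‖z + s • y‖ := by
    continuity
  have htend : Filter.Tendsto (fun s : ℝ => ‖z + s • y‖) (Filter.cocompact ℝ) Filter.atTop := by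
    apply Filter.tendsto_atTop_mono (fun s => ?_)
      (Filter.tendsto_atTop_add_const_right _ (-‖z‖) tendsto_norm_cocompact_atTop)
    have h1 : ‖s • y‖ - ‖z‖ ≤ ‖z + s • y‖ := by
      have := norm_sub_le (z + s • y) z
      simp only [add_sub_cancel_left] at this
      linarith
    rw [norm_smul, Real.norm_eq_abs, hyn, mul_one] at h1
    simpa [Real.norm_eq_abs] using h1
  obtain ⟨s₀, hs₀⟩ := hcont.exists_forall_le htend
  set x₀ : V := z + s₀ • y with hx0
  have hx₀ne : x₀ ≠ 0 := hne s₀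
  have hx₀n : ‖x₀‖ ≠ 0 := norm_ne_zero_iff.2 hx₀ne
  refine ⟨‖x₀‖⁻¹ • x₀, y, ?_, hyn, ?_⟩
  · rw [norm_smul, Real.norm_eq_abs, abs_inv, abs_norm]
    field_simp
  · intro t
    have key : ‖x₀‖ ≤ ‖x₀ + (‖x₀‖ * t) • y‖ := by
      have := hs₀ (s₀ + ‖x₀‖ * t)
      calc ‖x₀‖ = ‖z + s₀ • y‖ := rfl
        _ ≤ ‖z + (s₀ + ‖x₀‖ * t) • y‖ := this
        _ = ‖x₀ + (‖x₀‖ * t) • y‖ := by rw [hx0, add_smul, ← add_assoc]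
    rw [norm_smul, Real.norm_eq_abs, abs_inv, abs_norm]
    rw [← mul_le_mul_iff_right₀ (a := ‖x₀‖) (by positivity)]
    calc ‖x₀‖ * (‖x₀‖⁻¹ * ‖x₀‖) = ‖x₀‖ := by field_simp
      _ ≤ ‖x₀ + (‖x₀‖ * t) • y‖ := key
      _ = ‖x₀‖ * ‖‖x₀‖⁻¹ • x₀ + t • y‖ := by
          have h3 : ‖x₀‖ • (‖x₀‖⁻¹ • x₀ + t • y) = x₀ + (‖x₀‖ * t) • y := by
            rw [smul_add, smul_smul, smul_smul, mul_inv_cancel₀ hx₀n, one_smul]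
          rw [← h3, norm_smul_of_nonneg (norm_nonneg x₀)]

theorem cD_bounds (hV : finrank ℝ V = 2) : 1 / 2 ≤ cD V ∧ cD V ≤ 1 := by
  obtain ⟨x, y, hx, hy, hB⟩ := exists_borth hV
  set S := {r : ℝ | ∃ x y : V, ‖x‖ = 1 ∧ ‖y‖ = 1 ∧ BOrth x y ∧ r = sine y x} with hS
  have hmem : sine y x ∈ S := ⟨x, y, hx, hy, hB, rfl⟩
  have hlb : ∀ r ∈ S, 1 / 2 ≤ r := by
    rintro r ⟨a, b, ha, hb, hab, rfl⟩
    exact sine_lower ha hb hab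
  constructor
  · exact le_csInf ⟨_, hmem⟩ hlb
  · exact csInf_le_of_le ⟨1 / 2, hlb⟩ hmem (sine_upper hy)
end

section
/- In a Radon plane, c_T(‖·‖) = 1 if and only if the unit circle is an affine regular hexagon, where c_T is the supremum of s(Δ) over equilateral triangles Δ. -/
open Module

variable {V : Type*} [NormedAddCommGroup V] [NormedSpace ℝ V]

def IsAffRegHexagon (V : Type*) [NormedAddCommGroup V] [NormedSpace ℝ V] : Prop :=
  ∃ u v : V, LinearIndependent ℝ ![u, v] ∧ ‖u‖ = 1 ∧ ‖v‖ = 1 ∧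
    {w : V | ‖w‖ = 1} =
      frontier (convexHull ℝ ({u, -u, v, -v, u + v, -(u + v)} : Set V))

noncomputable def triSines (V : Type*) [NormedAddCommGroup V] [NormedSpace ℝ V] : Set ℝ :=
  {r : ℝ | ∃ x y z : V, ‖x‖ = 1 ∧ ‖y‖ = 1 ∧ ‖z‖ = 1 ∧ x + y + z = 0 ∧ r = sine x y}

/-! ### Auxiliary lemmas -/

lemma bddBelow_norms (x y : V) : BddBelow (Set.range fun t : ℝ => ‖x + t • y‖) :=
  ⟨0, by rintro r ⟨t, rfl⟩; positivity⟩

lemma sine_le_norm (x y : V) : sine x y ≤ ‖x‖ := by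
  simpa [sine] using ciInf_le (bddBelow_norms x y) 0

lemma bOrth_of_sine {x y : V} (hx : ‖x‖ = 1) (h : sine x y = 1) : BOrth x y := fun t => by
  rw [hx, ← h]; exact ciInf_le (bddBelow_norms x y) t

lemma abs_le_norm_combo {x y : V} (h : BOrth x y) (hx : ‖x‖ = 1) (a b : ℝ) :
    |a| ≤ ‖a • x + b • y‖ := by
  rcases eq_or_ne a 0 with rfl | ha
  · simpa using norm_nonneg _
  · have he : a • x + b • y = a • (x + (b / a) • y) := by
      rw [smul_add, smul_smul]; field_simp
    rw [he, norm_smul, Real.norm_eq_abs]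
    calc |a| = |a| * ‖x‖ := by rw [hx, mul_one]
      _ ≤ |a| * ‖x + (b / a) • y‖ := mul_le_mul_of_nonneg_left (h _) (abs_nonneg a)

/-! ### Hexagon convex hull membership -/

lemma hexMemA {x y : V} {a b : ℝ} (hb : 0 ≤ b) (hba : b ≤ a) (ha : a ≤ 1) :
    a • x + b • y ∈ convexHull ℝ ({x, -x, y, -y, x + y, -(x + y)} : Set V) := by
  set S : Set V := {x, -x, y, -y, x + y, -(x + y)}
  have hmem : ∀ i : Fin 3, (![x, -x, x + y] i) ∈ convexHull ℝ S := by
    intro i; fin_cases i <;>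
      exact subset_convexHull ℝ S (by simp [S, Set.mem_insert_iff])
  have := (convex_convexHull ℝ S).sum_mem (t := Finset.univ)
    (w := ![a - b + (1 - a) / 2, (1 - a) / 2, b]) (z := ![x, -x, x + y])
    (by intro i _; fin_cases i <;> simp <;> linarith)
    (by simp [Fin.sum_univ_three]; ring)
    (fun i _ => hmem i)
  have heq : ∑ i : Fin 3, (![a - b + (1 - a) / 2, (1 - a) / 2, b] i) • (![x, -x, x + y] i)
      = a • x + b • y := by
    simp [Fin.sum_univ_three]; module
  rwa [heq] at this

lemma hexMemC {x y : V} {a b : ℝ} (ha : a ≤ 0) (hb : 0 ≤ b) (hba : b - a ≤ 1) :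
    a • x + b • y ∈ convexHull ℝ ({x, -x, y, -y, x + y, -(x + y)} : Set V) := by
  set S : Set V := {x, -x, y, -y, x + y, -(x + y)}
  have hmem : ∀ i : Fin 3, (![-x, x, y] i) ∈ convexHull ℝ S := by
    intro i; fin_cases i <;>
      exact subset_convexHull ℝ S (by simp [S, Set.mem_insert_iff])
  have := (convex_convexHull ℝ S).sum_mem (t := Finset.univ)
    (w := ![-a + (1 - (b - a)) / 2, (1 - (b - a)) / 2, b]) (z := ![-x, x, y])
    (by intro i _; fin_cases i <;> simp <;> linarith)
    (by simp [Fin.sum_univ_three]; ring)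
    (fun i _ => hmem i)
  have heq : ∑ i : Fin 3, (![-a + (1 - (b - a)) / 2, (1 - (b - a)) / 2, b] i) • (![-x, x, y] i)
      = a • x + b • y := by
    simp [Fin.sum_univ_three]; module
  rwa [heq] at this

lemma hexSwap (x y : V) : ({y, -y, x, -x, y + x, -(y + x)} : Set V)
    = {x, -x, y, -y, x + y, -(x + y)} := by
  rw [add_comm]; ext w; simp only [Set.mem_insert_iff, Set.mem_singleton_iff]; tauto

lemma hexNegSet (x y : V) : -({x, -x, y, -y, x + y, -(x + y)} : Set V)
    = {x, -x, y, -y, x + y, -(x + y)} := by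
  ext w; simp only [Set.mem_neg, Set.mem_insert_iff, Set.mem_singleton_iff, neg_eq_iff_eq_neg]
  constructor <;> (rintro (h|h|h|h|h|h) <;> simp_all)

lemma hexMemNeg {x y : V} {w : V}
    (h : -w ∈ convexHull ℝ ({x, -x, y, -y, x + y, -(x + y)} : Set V)) :
    w ∈ convexHull ℝ ({x, -x, y, -y, x + y, -(x + y)} : Set V) := by
  have := Set.neg_mem_neg.mpr h
  rw [neg_neg, ← convexHull_neg, hexNegSet] at this
  exact this

lemma hexMem {x y : V} {a b : ℝ} (ha : |a| ≤ 1) (hb : |b| ≤ 1) (hab : |a - b| ≤ 1) :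
    a • x + b • y ∈ convexHull ℝ ({x, -x, y, -y, x + y, -(x + y)} : Set V) := by
  rw [abs_le] at ha hb hab
  have hswap : ∀ {a b : ℝ}, 0 ≤ a → a ≤ b → b ≤ 1 →
      a • x + b • y ∈ convexHull ℝ ({x, -x, y, -y, x + y, -(x + y)} : Set V) := by
    intro a b h1 h2 h3
    have := hexMemA (x := y) (y := x) h1 h2 h3
    rw [hexSwap] at this
    rwa [add_comm (b • y)] at this
  have hpos : ∀ {a b : ℝ}, 0 ≤ a → 0 ≤ b → a ≤ 1 → b ≤ 1 →
      a • x + b • y ∈ convexHull ℝ ({x, -x, y, -y, x + y, -(x + y)} : Set V) := by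
    intro a b h1 h2 h3 h4
    rcases le_total b a with h | h
    · exact hexMemA h2 h h3
    · exact hswap h1 h h4
  have hneg : -(a • x + b • y) = (-a) • x + (-b) • y := by module
  rcases le_total 0 a with ha0 | ha0 <;> rcases le_total 0 b with hb0 | hb0
  · exact hpos ha0 hb0 ha.2 hb.2
  · apply hexMemNeg; rw [hneg]
    exact hexMemC (by linarith) (by linarith) (by linarith)
  · exact hexMemC ha0 hb0 (by linarith)
  · apply hexMemNeg; rw [hneg]
    exact hpos (by linarith) (by linarith) (by linarith) (by linarith)

/-! ### The truncated sine function and its continuity -/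

noncomputable def Ftri {V : Type*} [NormedAddCommGroup V] [NormedSpace ℝ V] (p : V × V) : ℝ :=
  ⨅ t : Set.Icc (-2 : ℝ) 2, ‖p.1 + (t : ℝ) • p.2‖

instance : Nonempty (Set.Icc (-2 : ℝ) 2) := ⟨⟨0, by norm_num⟩⟩

lemma bddBelow_F (p : V × V) : BddBelow (Set.range fun t : Set.Icc (-2 : ℝ) 2 =>
    ‖p.1 + (t : ℝ) • p.2‖) := ⟨0, by rintro r ⟨t, rfl⟩; positivity⟩

lemma Ftri_lipschitz : LipschitzWith 3 (Ftri (V := V)) := by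
  apply LipschitzWith.of_le_add_mul
  intro p q
  have key : ∀ t : Set.Icc (-2 : ℝ) 2, Ftri p ≤ ‖q.1 + (t : ℝ) • q.2‖ + 3 * dist p q := by
    intro t
    have h1 : Ftri p ≤ ‖p.1 + (t : ℝ) • p.2‖ := ciInf_le (bddBelow_F p) t
    have h2 : ‖p.1 + (t : ℝ) • p.2‖ ≤ ‖q.1 + (t : ℝ) • q.2‖ + (‖p.1 - q.1‖ + 2 * ‖p.2 - q.2‖) := by
      have e : p.1 + (t : ℝ) • p.2
          = (q.1 + (t : ℝ) • q.2) + ((p.1 - q.1) + (t : ℝ) • (p.2 - q.2)) := by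
        module
      rw [e]
      refine (norm_add_le _ _).trans (by
        have := norm_add_le (p.1 - q.1) ((t : ℝ) • (p.2 - q.2))
        have ht : ‖(t : ℝ) • (p.2 - q.2)‖ ≤ 2 * ‖p.2 - q.2‖ := by
          rw [norm_smul, Real.norm_eq_abs]
          have : |(t : ℝ)| ≤ 2 := abs_le.mpr ⟨t.2.1, t.2.2⟩
          nlinarith [norm_nonneg (p.2 - q.2)]
        linarith)
    have h3 : ‖p.1 - q.1‖ ≤ dist p q := by
      rw [← dist_eq_norm, Prod.dist_eq]; exact le_max_left _ _
    have h4 : ‖p.2 - q.2‖ ≤ dist p q := by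
      rw [← dist_eq_norm, Prod.dist_eq]; exact le_max_right _ _
    calc Ftri p ≤ ‖q.1 + (t : ℝ) • q.2‖ + (‖p.1 - q.1‖ + 2 * ‖p.2 - q.2‖) := h1.trans h2
      _ ≤ ‖q.1 + (t : ℝ) • q.2‖ + 3 * dist p q := by linarith
  have hle := le_ciInf key
  have hadd := ciInf_add (bddBelow_F q) (3 * dist p q)
  push_cast
  rw [← hadd] at hle
  exact hle

lemma sine_eq_Ftri {x y : V} (hx : ‖x‖ = 1) (hy : ‖y‖ = 1) : sine x y = Ftri (x, y) := by
  apply le_antisymm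
  · exact le_ciInf fun t => ciInf_le (bddBelow_norms x y) (t : ℝ)
  · refine le_ciInf fun t => ?_
    rcases le_or_gt (|t|) 2 with ht | ht
    · exact ciInf_le (bddBelow_F (x, y)) ⟨t, abs_le.mp ht⟩
    · have h1 : Ftri (x, y) ≤ 1 := by
        have := ciInf_le (bddBelow_F (x, y)) ⟨0, by norm_num⟩
        simpa [hx, Ftri] using this
      have h2 : (1 : ℝ) ≤ ‖x + t • y‖ := by
        have := norm_sub_norm_le (t • y) (-x)
        simp only [norm_smul, Real.norm_eq_abs, hy, hx, mul_one, norm_neg, sub_neg_eq_add] at this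
        rw [show t • y + x = x + t • y by module] at this
        linarith
      linarith

lemma exists_equilateral (hV : finrank ℝ V = 2) :
    ∃ x y : V, ‖x‖ = 1 ∧ ‖y‖ = 1 ∧ ‖x + y‖ = 1 := by
  haveI : FiniteDimensional ℝ V := FiniteDimensional.of_finrank_pos (by omega)
  haveI : Nontrivial V := Module.nontrivial_of_finrank_pos (R := ℝ) (by omega)
  obtain ⟨x, hx⟩ := NormedSpace.sphere_nonempty (x := (0:V)) (r := 1) |>.mpr zero_le_one
  have hrank : 1 < Module.rank ℝ V := by
    rw [← finrank_eq_rank, hV]; norm_num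
  have hconn := isConnected_sphere hrank (0 : V) (zero_le_one)
  have hx' : ‖x‖ = 1 := by simpa [mem_sphere_zero_iff_norm] using hx
  have hmem1 : -x ∈ Metric.sphere (0:V) 1 := by
    simp [mem_sphere_zero_iff_norm, hx']
  have hcont : ContinuousOn (fun y : V => ‖x + y‖) (Metric.sphere (0:V) 1) :=
    ((continuous_const.add continuous_id).norm).continuousOn
  have hIcc := hconn.isPreconnected.intermediate_value hmem1 hx hcont
  have h0 : ‖x + -x‖ = 0 := by simp
  have h2 : ‖x + x‖ = 2 := by
    have e : x + x = (2:ℝ) • x := by module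
    simp [e, norm_smul, hx']
  rw [h0, h2] at hIcc
  obtain ⟨y, hy, hxy⟩ := hIcc (by norm_num : (1:ℝ) ∈ Set.Icc (0:ℝ) 2)
  exact ⟨x, y, hx', by simpa [mem_sphere_zero_iff_norm] using hy, hxy⟩

theorem cT_eq_one_iff (hV : finrank ℝ V = 2)
    (hRadon : ∀ x y : V, BOrth x y → BOrth y x) :
    sSup (triSines V) = 1 ↔ IsAffRegHexagon V := by
  haveI : FiniteDimensional ℝ V := FiniteDimensional.of_finrank_pos (by omega)
  constructor
  · intro hsup
    -- the constraint set
    set K : Set (V × V) := {p | ‖p.1‖ = 1 ∧ ‖p.2‖ = 1 ∧ ‖p.1 + p.2‖ = 1} with hKdef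
    have hKcl : IsClosed K := by
      have h1 : IsClosed {p : V × V | ‖p.1‖ = 1} :=
        isClosed_eq continuous_fst.norm continuous_const
      have h2 : IsClosed {p : V × V | ‖p.2‖ = 1} :=
        isClosed_eq continuous_snd.norm continuous_const
      have h3 : IsClosed {p : V × V | ‖p.1 + p.2‖ = 1} :=
        isClosed_eq (continuous_fst.add continuous_snd).norm continuous_const
      exact h1.inter (h2.inter h3)
    have hKb : Bornology.IsBounded K := by
      apply (Metric.isBounded_closedBall (x := (0 : V × V)) (r := 1)).subset
      rintro ⟨p1, p2⟩ ⟨h1, h2, _⟩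
      rw [mem_closedBall_zero_iff, Prod.norm_def]
      simp [h1, h2]
    have hKcomp : IsCompact K := Metric.isCompact_of_isClosed_isBounded hKcl hKb
    have hKne : K.Nonempty := by
      obtain ⟨x, y, hx, hy, hxy⟩ := exists_equilateral hV
      exact ⟨(x, y), hx, hy, hxy⟩
    have htri : triSines V = Ftri '' K := by
      ext r; constructor
      · rintro ⟨x, y, z, hx, hy, hz, hsum, rfl⟩
        have hzq : x + y = -z := by
          have : (x + y) + z = 0 := hsum
          linear_combination (norm := module) this
        have hxy : ‖x + y‖ = 1 := by rw [hzq, norm_neg, hz]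
        exact ⟨(x, y), ⟨hx, hy, hxy⟩, (sine_eq_Ftri hx hy).symm⟩
      · rintro ⟨⟨x, y⟩, ⟨hx, hy, hxy⟩, rfl⟩
        exact ⟨x, y, -(x + y), hx, hy, by rw [norm_neg, hxy],
          by module, (sine_eq_Ftri hx hy).symm⟩
    have hmem : (1 : ℝ) ∈ triSines V := by
      rw [← hsup, htri]
      exact IsCompact.sSup_mem (hKcomp.image Ftri_lipschitz.continuous) (hKne.image _)
    obtain ⟨x, y, z, hx, hy, hz, hsum, hsine⟩ := hmem
    have hzq : x + y = -z := by
      have : (x + y) + z = 0 := hsum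
      linear_combination (norm := module) this
    have hxy : ‖x + y‖ = 1 := by rw [hzq, norm_neg, hz]
    have hBxy : BOrth x y := bOrth_of_sine hx hsine.symm
    have hByx : BOrth y x := hRadon _ _ hBxy
    have hBzx : BOrth (x + y) x := by
      intro t
      rw [hxy, show (x + y) + t • x = y + (1 + t) • x by module]
      have := hByx (1 + t); rwa [hy] at this
    have hBx_z : BOrth x (x + y) := hRadon _ _ hBzx
    have li : LinearIndependent ℝ ![x, y] := by
      rw [linearIndependent_fin2]
      constructor
      · simp only [Matrix.cons_val_one, Matrix.head_cons, Matrix.cons_val_zero]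
        intro h; rw [h] at hy; simp at hy
      · intro a h
        simp only [Matrix.cons_val_one, Matrix.head_cons, Matrix.cons_val_zero] at h
        have h0 : x + (-a) • y = 0 := by rw [← h]; module
        have := hBxy (-a)
        rw [hx, h0] at this
        simp at this
        linarith
    set B := basisOfLinearIndependentOfCardEqFinrank li (by simp [hV]) with hB
    have hBc : ⇑B = ![x, y] := coe_basisOfLinearIndependentOfCardEqFinrank li _
    have hB0 : B 0 = x := by rw [hBc]; rfl
    have hB1 : B 1 = y := by rw [hBc]; rfl
    have ball_sub : ∀ w : V, ‖w‖ ≤ 1 →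
        w ∈ convexHull ℝ ({x, -x, y, -y, x + y, -(x + y)} : Set V) := by
      intro w hw
      have hr := B.sum_repr w
      rw [Fin.sum_univ_two, hB0, hB1] at hr
      set a := B.repr w 0
      set b := B.repr w 1
      have h1 : |a| ≤ 1 := by
        have := abs_le_norm_combo hBxy hx a b
        rw [hr] at this; linarith
      have h2 : |b| ≤ 1 := by
        have := abs_le_norm_combo hByx hy b a
        rw [add_comm, hr] at this; linarith
      have h3 : |a - b| ≤ 1 := by
        have := abs_le_norm_combo hBx_z hx (a - b) b
        rw [show (a - b) • x + b • (x + y) = a • x + b • y by module, hr] at this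
        linarith
      exact hr ▸ hexMem h1 h2 h3
    have hull_sub : convexHull ℝ ({x, -x, y, -y, x + y, -(x + y)} : Set V)
        ⊆ Metric.closedBall (0 : V) 1 := by
      apply convexHull_min _ (convex_closedBall 0 1)
      intro s hs
      simp only [Set.mem_insert_iff, Set.mem_singleton_iff] at hs
      rcases hs with rfl | rfl | rfl | rfl | rfl | rfl
      · simp [mem_closedBall_zero_iff, hx]
      · simp [mem_closedBall_zero_iff, hx]
      · simp [mem_closedBall_zero_iff, hy]
      · simp [mem_closedBall_zero_iff, hy]
      · simp [mem_closedBall_zero_iff, hxy]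
      · rw [mem_closedBall_zero_iff, norm_neg, hxy]
    have hHB : convexHull ℝ ({x, -x, y, -y, x + y, -(x + y)} : Set V)
        = Metric.closedBall (0 : V) 1 :=
      subset_antisymm hull_sub fun w hw => ball_sub w (mem_closedBall_zero_iff.mp hw)
    refine ⟨x, y, li, hx, hy, ?_⟩
    rw [hHB, frontier_closedBall _ one_ne_zero]
    ext w
    simp [mem_sphere_zero_iff_norm]
  · rintro ⟨u, v, li, hu, hv, hfr⟩
    set S : Set V := {u, -u, v, -v, u + v, -(u + v)} with hS
    set H := convexHull ℝ S with hH
    have hHcomp : IsCompact H := (Set.toFinite S).isCompact_convexHull (𝕜 := ℝ)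
    have hHcl : IsClosed H := hHcomp.isClosed
    have huH : u ∈ H := subset_convexHull ℝ S (by simp [hS])
    have hnuH : -u ∈ H := subset_convexHull ℝ S (by simp [hS])
    have huvH : u + v ∈ H := subset_convexHull ℝ S (by simp [hS])
    have h0H : (0 : V) ∈ H := by
      have := (convex_convexHull ℝ S) huH hnuH
        (by norm_num : (0:ℝ) ≤ 1/2) (by norm_num : (0:ℝ) ≤ 1/2) (by norm_num)
      simpa using this
    have hsphere : ∀ w : V, ‖w‖ = 1 → w ∈ H := by
      intro w hw
      have : w ∈ frontier H := by rw [← hfr]; exact hw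
      exact hHcl.frontier_subset this
    have hball : ∀ w : V, ‖w‖ ≤ 1 → w ∈ H := by
      intro w hw
      rcases eq_or_ne w 0 with rfl | hw0
      · exact h0H
      · have hc0 : 0 < ‖w‖ := norm_pos_iff.mpr hw0
        set c := ‖w‖ with hc
        set n := c⁻¹ • w with hn
        have hn1 : ‖n‖ = 1 := by
          rw [hn, norm_smul, Real.norm_eq_abs, abs_of_pos (by positivity)]
          field_simp
          exact hc.symm
        have hnH : n ∈ H := hsphere n hn1
        have hnH' : -n ∈ H := hsphere (-n) (by rw [norm_neg]; exact hn1)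
        have hcomb := (convex_convexHull ℝ S) hnH hnH'
          (by linarith : (0:ℝ) ≤ (1 + c)/2) (by linarith : (0:ℝ) ≤ (1 - c)/2) (by ring)
        have he : ((1 + c)/2) • n + ((1 - c)/2) • (-n) = w := by
          have e1 : ((1 + c)/2) • n + ((1 - c)/2) • (-n) = c • n := by module
          rw [e1, hn, smul_smul, mul_inv_cancel₀ hc0.ne', one_smul]
        rwa [he] at hcomb
    have hHb : ∀ w ∈ H, ‖w‖ ≤ 1 := by
      obtain ⟨p, hpH, hpmax⟩ := hHcomp.exists_isMaxOn ⟨0, h0H⟩ continuous_norm.continuousOn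
      intro w hwH
      by_contra hgt
      push_neg at hgt
      have hp1 : 1 < ‖p‖ := hgt.trans_le (hpmax hwH)
      have hpfr : p ∉ frontier H := by
        rw [← hfr]; intro h
        rw [Set.mem_setOf_eq] at h; linarith
      have hpint : p ∈ interior H := by
        by_contra hni
        exact hpfr (by rw [hHcl.frontier_eq]; exact ⟨hpH, hni⟩)
      obtain ⟨ε, hε, hball'⟩ := Metric.isOpen_iff.mp isOpen_interior p hpint
      have hp0 : 0 < ‖p‖ := by linarith
      set q := (1 + ε / (2 * ‖p‖)) • p with hq
      have hqp : dist q p = ε / 2 := by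
        rw [dist_eq_norm, hq, add_smul, one_smul, add_sub_cancel_left, norm_smul,
          Real.norm_eq_abs, abs_of_pos (by positivity)]
        field_simp
      have hqH : q ∈ H := interior_subset (hball' (by rw [Metric.mem_ball, hqp]; linarith))
      have hqn : ‖q‖ = (1 + ε / (2 * ‖p‖)) * ‖p‖ := by
        rw [hq, norm_smul, Real.norm_eq_abs, abs_of_pos (by positivity)]
      have hlt : ‖p‖ < ‖q‖ := by
        rw [hqn]
        have : (1 + ε / (2 * ‖p‖)) * ‖p‖ = ‖p‖ + ε / 2 := by field_simp
        rw [this]; linarith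
      exact absurd (hpmax hqH) (not_le.mpr hlt)
    -- the coordinate functional
    set B := basisOfLinearIndependentOfCardEqFinrank li (by simp [hV]) with hB
    have hBc : ⇑B = ![u, v] := coe_basisOfLinearIndependentOfCardEqFinrank li _
    have hB0 : B 0 = u := by rw [hBc]; rfl
    have hB1 : B 1 = v := by rw [hBc]; rfl
    set f := B.coord 0 with hf
    have hfu : f u = 1 := by
      rw [hf, ← hB0, Basis.coord_apply, Basis.repr_self, Finsupp.single_eq_same]
    have hfv : f v = 0 := by
      rw [hf, ← hB1, Basis.coord_apply, Basis.repr_self]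
      simp
    have hfS : S ⊆ {w : V | f w ≤ 1} := by
      intro w hw
      simp only [hS, Set.mem_insert_iff, Set.mem_singleton_iff] at hw
      rcases hw with rfl | rfl | rfl | rfl | rfl | rfl <;>
        simp [map_neg, map_add, hfu, hfv] <;> norm_num
    have hfH : ∀ w ∈ H, f w ≤ 1 :=
      fun w hw => convexHull_min hfS (convex_halfSpace_le f.isLinear 1) hw
    have hfnorm : ∀ w : V, f w ≤ ‖w‖ := by
      intro w
      rcases eq_or_ne w 0 with rfl | hw0
      · simp
      · have hc0 : 0 < ‖w‖ := norm_pos_iff.mpr hw0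
        have hn1 : ‖(‖w‖⁻¹ • w)‖ = 1 := by
          rw [norm_smul, Real.norm_eq_abs, abs_of_pos (by positivity)]
          field_simp
        have := hfH _ (hball _ hn1.le)
        rw [map_smul] at this
        have h2 : ‖w‖ * (‖w‖⁻¹ • f w) ≤ ‖w‖ * 1 := by
          exact mul_le_mul_of_nonneg_left this hc0.le
        rw [smul_eq_mul, ← mul_assoc, mul_inv_cancel₀ hc0.ne', one_mul, mul_one] at h2
        exact h2
    have huv_ge : 1 ≤ ‖u + v‖ := by
      have := hfnorm (u + v)
      rw [map_add, hfu, hfv] at this; linarith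
    have huv1 : ‖u + v‖ = 1 := le_antisymm (hHb _ huvH) huv_ge
    have hsineuv : sine u v = 1 := by
      apply le_antisymm (hu ▸ sine_le_norm u v)
      refine le_ciInf fun t => ?_
      have := hfnorm (u + t • v)
      rw [map_add, map_smul, hfu, hfv, smul_eq_mul, mul_zero, add_zero] at this
      exact this
    have hmem1 : (1 : ℝ) ∈ triSines V :=
      ⟨u, v, -(u + v), hu, hv, by rw [norm_neg, huv1], by module, hsineuv.symm⟩
    have hub : ∀ r ∈ triSines V, r ≤ 1 := by
      rintro r ⟨x, y, z, hx, _, _, _, rfl⟩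
      calc sine x y ≤ ‖x‖ := sine_le_norm x y
        _ = 1 := hx
    exact le_antisymm (csSup_le ⟨1, hmem1⟩ hub) (le_csSup ⟨1, fun r hr => hub r hr⟩ hmem1)
end
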